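/- Assume conditions (⋆) and (⋆⋆) of Proposition 3 and that 1̄ = 1. If (1, b) ∈ C₁ for all b ∈ B, the pairs (m, m∘θ) and (m, m∘φ) are jointly monomorphic, and (X, ·, 1) is a monoid, then (θ, φ, m : C₂ → C₁) is a unital and associative involutive-2-link in the category of types; moreover, the underlying reflexive graph of the associated internal groupoid has object set B, morphism set C₁, domain d(x, b) = b, codomain c(x, b) = g(x, b) and identities e(b) = (1, b). -/

import Mathlib

universe u

section Link

variable {X B : Type u}

/-- The subset `C₁ = {(x, b) : f(x, b, 1, 0) = x = f(1, 0, x, b)}`. -/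
def linkC1 (f : X → B → X → B → X) (one : X) (zero : B) : Set (X × B) :=
  {p | f p.1 p.2 one zero = p.1 ∧ f one zero p.1 p.2 = p.1}

/-- The subset `C₂ = {(y, x, b) : (y, g(x, b)) ∈ C₁ and (x, b) ∈ C₁}`. -/
def linkC2 (f : X → B → X → B → X) (g : X → B → B) (one : X) (zero : B) :
    Set (X × X × B) :=
  {t | ((t.1, g t.2.1 t.2.2) : X × B) ∈ linkC1 f one zero ∧
    ((t.2.1, t.2.2) : X × B) ∈ linkC1 f one zero}

/-- `m(y, x, b) = (y·x, b)`. -/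
def linkM (mul : X → X → X) : X × X × B → X × B :=
  fun t => (mul t.1 t.2.1, t.2.2)

/-- `θ(y, x, b) = (ȳ, y·x, b)`. -/
def linkθ (mul : X → X → X) (bar : X → X) : X × X × B → X × X × B :=
  fun t => (bar t.1, mul t.1 t.2.1, t.2.2)

/-- `φ(y, x, b) = (y·x, x̄, g(ȳ·(y·x), b))`. -/
def linkφ (mul : X → X → X) (bar : X → X) (g : X → B → B) :
    X × X × B → X × X × B :=
  fun t => (mul t.1 t.2.1, bar t.2.1, g (mul (bar t.1) (mul t.1 t.2.1)) t.2.2)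

section Closure

variable (mul : X → X → X) (one : X) (zero : B) (bar : X → X)
  (f : X → B → X → B → X) (g : X → B → B)

/-- Proposition 2 (well-definedness of `m`): if `(y, x, b) ∈ C₂` then
`(y·x, b) ∈ C₁`. -/
theorem linkM_mem
    (hf : ∀ y x b y' x' b', f (mul y x) b (mul y' x') b' =
      mul (f y (g x b) y' (g x' b')) (f x b x' b'))
    (hg10 : g one zero = zero) (h11 : mul one one = one) :
    ∀ t ∈ linkC2 f g one zero, linkM mul t ∈ linkC1 f one zero := by
  rintro ⟨y, x, b⟩ ⟨⟨h1a, h1b⟩, h2a, h2b⟩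
  constructor
  · show f (mul y x) b one zero = mul y x
    calc f (mul y x) b one zero = f (mul y x) b (mul one one) zero := by rw [h11]
      _ = mul (f y (g x b) one (g one zero)) (f x b one zero) := hf ..
      _ = mul y x := by rw [hg10, h1a, h2a]
  · show f one zero (mul y x) b = mul y x
    calc f one zero (mul y x) b = f (mul one one) zero (mul y x) b := by rw [h11]
      _ = mul (f one (g one zero) y (g x b)) (f one zero x b) := hf ..
      _ = mul y x := by rw [hg10, h1b, h2b]

/-- Closure of `C₂` under `θ`. -/
theorem linkθ_mem
    (hf : ∀ y x b y' x' b', f (mul y x) b (mul y' x') b' =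
      mul (f y (g x b) y' (g x' b')) (f x b x' b'))
    (hg : ∀ y x b, g (mul y x) b = g y (g x b))
    (hg10 : g one zero = zero) (h11 : mul one one = one)
    (hstar : ∀ x b, ((x, b) : X × B) ∈ linkC1 f one zero →
      ((bar x, g x b) : X × B) ∈ linkC1 f one zero) :
    ∀ t ∈ linkC2 f g one zero, linkθ mul bar t ∈ linkC2 f g one zero := by
  rintro ⟨y, x, b⟩ ht
  constructor
  · show ((bar y, g (mul y x) b) : X × B) ∈ linkC1 f one zero
    rw [hg]
    exact hstar y (g x b) ht.1
  · exact linkM_mem mul one zero f g hf hg10 h11 _ ht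

/-- Closure of `C₂` under `φ`. -/
theorem linkφ_mem
    (hf : ∀ y x b y' x' b', f (mul y x) b (mul y' x') b' =
      mul (f y (g x b) y' (g x' b')) (f x b x' b'))
    (hg : ∀ y x b, g (mul y x) b = g y (g x b))
    (hg10 : g one zero = zero) (h11 : mul one one = one)
    (hiv' : ∀ x b, g (mul (bar x) x) b = b)
    (hstar : ∀ x b, ((x, b) : X × B) ∈ linkC1 f one zero →
      ((bar x, g x b) : X × B) ∈ linkC1 f one zero)
    (hcancel : ∀ t ∈ linkC2 f g one zero, mul (bar t.1) (mul t.1 t.2.1) = t.2.1) :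
    ∀ t ∈ linkC2 f g one zero, linkφ mul bar g t ∈ linkC2 f g one zero := by
  rintro ⟨y, x, b⟩ ht
  have hx : mul (bar y) (mul y x) = x := hcancel _ ht
  constructor
  · show ((mul y x, g (bar x) (g (mul (bar y) (mul y x)) b)) : X × B) ∈
      linkC1 f one zero
    rw [hx, ← hg, hiv']
    exact linkM_mem mul one zero f g hf hg10 h11 _ ht
  · show ((bar x, g (mul (bar y) (mul y x)) b) : X × B) ∈ linkC1 f one zero
    rw [hx]
    exact hstar x b ht.2

end Closure

/-- `m` as a map `C₂ → C₁`, given the closure property. -/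
def linkMS {f : X → B → X → B → X} {g : X → B → B} {one : X} {zero : B}
    (mul : X → X → X)
    (hm : ∀ t ∈ linkC2 f g one zero, linkM mul t ∈ linkC1 f one zero) :
    linkC2 f g one zero → linkC1 f one zero :=
  fun t => ⟨linkM mul t.1, hm t.1 t.2⟩

/-- `θ` as a map `C₂ → C₂`, given the closure property. -/
def linkθS {f : X → B → X → B → X} {g : X → B → B} {one : X} {zero : B}
    (mul : X → X → X) (bar : X → X)
    (hθ : ∀ t ∈ linkC2 f g one zero, linkθ mul bar t ∈ linkC2 f g one zero) :
    linkC2 f g one zero → linkC2 f g one zero :=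
  fun t => ⟨linkθ mul bar t.1, hθ t.1 t.2⟩

/-- `φ` as a map `C₂ → C₂`, given the closure property. -/
def linkφS {f : X → B → X → B → X} {g : X → B → B} {one : X} {zero : B}
    (mul : X → X → X) (bar : X → X)
    (hφ : ∀ t ∈ linkC2 f g one zero, linkφ mul bar g t ∈ linkC2 f g one zero) :
    linkC2 f g one zero → linkC2 f g one zero :=
  fun t => ⟨linkφ mul bar g t.1, hφ t.1 t.2⟩

end Link

open CategoryTheory in
/-- A commutative square of types which is both a pullback and a pushout
(an exact / bicartesian / Dolittle / pulation square). -/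
def Bicartesian {P X Y Z : Type u} (fst : P → X) (snd : P → Y)
    (f : X → Z) (g : Y → Z) : Prop :=
  CategoryTheory.IsPullback (C := Type u) (TypeCat.ofHom fst)
      (TypeCat.ofHom snd) (TypeCat.ofHom f)
      (TypeCat.ofHom g) ∧
    CategoryTheory.IsPushout (C := Type u) (TypeCat.ofHom fst)
      (TypeCat.ofHom snd) (TypeCat.ofHom f)
      (TypeCat.ofHom g)

/-- A pair of parallel maps is *jointly monomorphic*. -/
def JointlyMono {A B C : Type u} (f : A → B) (g : A → C) : Prop :=
  ∀ a a', f a = f a' → g a = g a' → a = a'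

/-- An involutive-2-link `(θ, φ, m)` is *unital* (Definition 1(1)). -/
def IsUnitalLink {C₂ C₁ : Type u} (θ φ : C₂ → C₂) (m : C₂ → C₁) : Prop :=
  JointlyMono m (m ∘ θ) ∧ JointlyMono m (m ∘ φ) ∧
  ∃ e₁ e₂ : C₁ → C₂,
    m ∘ e₁ = id ∧ m ∘ e₂ = id ∧
    θ ∘ e₂ = e₂ ∧ φ ∘ e₁ = e₁ ∧
    m ∘ θ ∘ φ ∘ e₂ = m ∘ φ ∘ θ ∘ e₁ ∧
    (m ∘ θ ∘ e₁) ∘ (m ∘ φ) = (m ∘ φ ∘ e₂) ∘ (m ∘ θ) ∧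
    (m ∘ θ ∘ e₁) ∘ m = (m ∘ θ ∘ e₁) ∘ (m ∘ θ) ∧
    (m ∘ φ ∘ e₂) ∘ m = (m ∘ φ ∘ e₂) ∘ (m ∘ φ)

/-- An involutive-2-link `(θ, φ, m)` is *associative* (Definition 1(2)). -/
def IsAssociativeLink {C₂ C₁ : Type u} (θ φ : C₂ → C₂) (m : C₂ → C₁) : Prop :=
  ∃ (C₀ : Type u) (d c : C₁ → C₀) (C₃ : Type u) (p₁ p₂ : C₃ → C₂),
    Bicartesian (m ∘ φ) (m ∘ θ) d c ∧
    Bicartesian p₂ p₁ (m ∘ φ) (m ∘ θ) ∧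
    ∃ m₁ m₂ : C₃ → C₂,
      (m ∘ φ) ∘ m₁ = m ∘ p₁ ∧ (m ∘ θ) ∘ m₁ = (m ∘ θ) ∘ p₂ ∧
      (m ∘ φ) ∘ m₂ = (m ∘ φ) ∘ p₁ ∧ (m ∘ θ) ∘ m₂ = m ∘ p₂ ∧
      m ∘ m₁ = m ∘ m₂

/-- The set-theoretic pullback `C₃` of the parallel pair `(π₁, π₂)`
(the object of composable triples). -/
def linkC3 {A C : Type u} (π₁ π₂ : A → C) : Type u :=
  {q : A × A // π₁ q.2 = π₂ q.1}

/-- First projection `p₁ : C₃ → C₂`. -/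
def linkP1 {A C : Type u} (π₁ π₂ : A → C) : linkC3 π₁ π₂ → A := fun q => q.1.1

/-- Second projection `p₂ : C₃ → C₂`. -/
def linkP2 {A C : Type u} (π₁ π₂ : A → C) : linkC3 π₁ π₂ → A := fun q => q.1.2

section Helpers
open CategoryTheory Limits

theorem types_isPullback {P X Y Z : Type u} (fst : P → X) (snd : P → Y)
    (f : X → Z) (g : Y → Z)
    (comm : ∀ p, f (fst p) = g (snd p))
    (inj : ∀ p q, fst p = fst q → snd p = snd q → p = q)
    (ex : ∀ x y, f x = g y → ∃ p, fst p = x ∧ snd p = y) :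
    CategoryTheory.IsPullback (C := Type u) (TypeCat.ofHom fst)
      (TypeCat.ofHom snd) (TypeCat.ofHom f) (TypeCat.ofHom g) := by
  have w : TypeCat.ofHom fst ≫ TypeCat.ofHom f = TypeCat.ofHom snd ≫ TypeCat.ofHom g :=
    ConcreteCategory.hom_ext _ _ (fun p => comm p)
  exact (Types.isPullback_iff _ _ _ _).2 ⟨w, fun p q h => inj p q h.1 h.2, ex⟩

theorem types_isPushout {P X Y Z : Type u} (fst : P → X) (snd : P → Y)
    (f : X → Z) (g : Y → Z)
    (comm : ∀ p, f (fst p) = g (snd p))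
    (huniq : ∀ {W : Type u} (w w' : Z → W),
      (∀ x, w (f x) = w' (f x)) → (∀ y, w (g y) = w' (g y)) → w = w')
    (hfac : ∀ {W : Type u} (u : X → W) (v : Y → W),
      (∀ p, u (fst p) = v (snd p)) →
      ∃ w : Z → W, (∀ x, w (f x) = u x) ∧ (∀ y, w (g y) = v y)) :
    CategoryTheory.IsPushout (C := Type u) (TypeCat.ofHom fst)
      (TypeCat.ofHom snd) (TypeCat.ofHom f) (TypeCat.ofHom g) := by
  have w : TypeCat.ofHom fst ≫ TypeCat.ofHom f = TypeCat.ofHom snd ≫ TypeCat.ofHom g :=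
    ConcreteCategory.hom_ext _ _ (fun p => comm p)
  exact IsPushout.of_isColimit (PushoutCocone.IsColimit.mk w
    (fun s => TypeCat.ofHom (Classical.choose (hfac (fun x => s.inl x) (fun y => s.inr y)
      (fun p => ConcreteCategory.congr_hom s.condition p))))
    (fun s => ConcreteCategory.hom_ext _ _ fun x =>
      (Classical.choose_spec (hfac (fun x => s.inl x) (fun y => s.inr y)
        (fun p => ConcreteCategory.congr_hom s.condition p))).1 x)
    (fun s => ConcreteCategory.hom_ext _ _ fun y =>
      (Classical.choose_spec (hfac (fun x => s.inl x) (fun y => s.inr y)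
        (fun p => ConcreteCategory.congr_hom s.condition p))).2 y)
    (fun s m h1 h2 => by
      have hspec := Classical.choose_spec (hfac (fun x => s.inl x) (fun y => s.inr y)
        (fun p => ConcreteCategory.congr_hom s.condition p))
      have hh := huniq (fun z => m z) _
        (fun x => (ConcreteCategory.congr_hom h1 x).trans (hspec.1 x).symm)
        (fun y => (ConcreteCategory.congr_hom h2 y).trans (hspec.2 y).symm)
      exact ConcreteCategory.hom_ext _ _ fun z => congrFun hh z))

end Helpers

/-- **Proposition 6.** Assuming (⋆), (⋆⋆), `1̄ = 1`, `(1, b) ∈ C₁` for all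
`b`, that the pairs `(m, m∘θ)` and `(m, m∘φ)` are jointly monomorphic, and
that `(X, ·, 1)` is a monoid, then `(θ, φ, m : C₂ → C₁)` is a unital and
associative involutive-2-link in the category of types; moreover the
underlying reflexive graph of the associated internal groupoid is
`C₁ ⇉ B` with `d(x, b) = b`, `c = g` and `e(b) = (1, b)`. -/
theorem link_unital_associative_and_reflexive_graph {X B : Type u}
    (mul : X → X → X) (one : X) (zero : B) (bar : X → X)
    (f : X → B → X → B → X) (g : X → B → B)
    (hf : ∀ y x b y' x' b', f (mul y x) b (mul y' x') b' =
      mul (f y (g x b) y' (g x' b')) (f x b x' b'))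
    (hg : ∀ y x b, g (mul y x) b = g y (g x b))
    (hg10 : g one zero = zero) (h11 : mul one one = one)
    (hiv : ∀ x y b, g (mul (bar x) (mul (bar y) (mul y x))) b = b)
    (hiv' : ∀ x b, g (mul (bar x) x) b = b)
    (hstar : ∀ x b, ((x, b) : X × B) ∈ linkC1 f one zero →
      ((bar x, g x b) : X × B) ∈ linkC1 f one zero ∧ bar (bar x) = x)
    (hstarstar : ∀ t ∈ linkC2 f g one zero,
      mul (bar t.1) (mul t.1 t.2.1) = t.2.1 ∧
      mul (mul t.1 t.2.1) (bar t.2.1) = t.1 ∧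
      mul t.2.1 (bar (mul t.1 t.2.1)) = bar t.1 ∧
      mul (bar (mul t.1 t.2.1)) t.1 = bar t.2.1)
    (hbar1 : bar one = one)
    (h1b : ∀ b, ((one, b) : X × B) ∈ linkC1 f one zero)
    (hone : ∀ x : X, mul one x = x ∧ mul x one = x)
    (hassoc : ∀ a b c : X, mul (mul a b) c = mul a (mul b c)) :
    ∀ (hm : ∀ t ∈ linkC2 f g one zero, linkM mul t ∈ linkC1 f one zero)
      (hθc : ∀ t ∈ linkC2 f g one zero, linkθ mul bar t ∈ linkC2 f g one zero)
      (hφc : ∀ t ∈ linkC2 f g one zero, linkφ mul bar g t ∈ linkC2 f g one zero),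
      JointlyMono (linkMS mul hm) (linkMS mul hm ∘ linkθS mul bar hθc) →
      JointlyMono (linkMS mul hm) (linkMS mul hm ∘ linkφS mul bar hφc) →
      IsUnitalLink (linkθS mul bar hθc) (linkφS mul bar hφc) (linkMS mul hm) ∧
      IsAssociativeLink (linkθS mul bar hθc) (linkφS mul bar hφc)
        (linkMS mul hm) ∧
      -- the underlying reflexive graph: d(x, b) = b, c = g, e(b) = (1, b)
      ((fun p : linkC1 f one zero => (p : X × B).2) ∘
        (fun b : B => (⟨(one, b), h1b b⟩ : linkC1 f one zero)) = id) ∧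
      ((fun p : linkC1 f one zero => g (p : X × B).1 (p : X × B).2) ∘
        (fun b : B => (⟨(one, b), h1b b⟩ : linkC1 f one zero)) = id) ∧
      Bicartesian (linkMS mul hm ∘ linkφS mul bar hφc)
        (linkMS mul hm ∘ linkθS mul bar hθc)
        (fun p => (p : X × B).2) (fun p => g (p : X × B).1 (p : X × B).2) ∧
      -- `e` is determined by `e ∘ d = m ∘ θ ∘ e₁` and `e ∘ c = m ∘ φ ∘ e₂`,
      -- where `e₁, e₂` are the unique sections provided by unitality
      (∀ e₁ e₂ : linkC1 f one zero → linkC2 f g one zero,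
        linkMS mul hm ∘ e₁ = id → linkMS mul hm ∘ e₂ = id →
        linkθS mul bar hθc ∘ e₂ = e₂ → linkφS mul bar hφc ∘ e₁ = e₁ →
        ((fun b : B => (⟨(one, b), h1b b⟩ : linkC1 f one zero)) ∘
            (fun p : linkC1 f one zero => (p : X × B).2) =
          linkMS mul hm ∘ linkθS mul bar hθc ∘ e₁ ∧
         (fun b : B => (⟨(one, b), h1b b⟩ : linkC1 f one zero)) ∘
            (fun p : linkC1 f one zero => g (p : X × B).1 (p : X × B).2) =
          linkMS mul hm ∘ linkφS mul bar hφc ∘ e₂)) := by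
  intro hm hθc hφc hmθ hmφ
  -- abbreviations (only as plain terms)
  have honel : ∀ x : X, mul one x = x := fun x => (hone x).1
  have honer : ∀ x : X, mul x one = x := fun x => (hone x).2
  have hg1 : ∀ b, g one b = b := fun b => by
    have h := hiv' one b; rwa [hbar1, h11] at h
  -- values of m∘θ and m∘φ on C₂
  have hMθ : ∀ t : linkC2 f g one zero,
      ((linkMS mul hm (linkθS mul bar hθc t)) : X × B) = (t.1.2.1, t.1.2.2) := by
    intro t
    show (mul (bar t.1.1) (mul t.1.1 t.1.2.1), t.1.2.2) = _
    rw [(hstarstar t.1 t.2).1]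
  have hMφ : ∀ t : linkC2 f g one zero,
      ((linkMS mul hm (linkφS mul bar hφc t)) : X × B) =
        (t.1.1, g t.1.2.1 t.1.2.2) := by
    intro t
    show (mul (mul t.1.1 t.1.2.1) (bar t.1.2.1),
      g (mul (bar t.1.1) (mul t.1.1 t.1.2.1)) t.1.2.2) = _
    rw [(hstarstar t.1 t.2).2.1, (hstarstar t.1 t.2).1]
  -- the canonical sections E₁, E₂
  have memE₁ : ∀ p : linkC1 f one zero,
      ((p : X × B).1, one, (p : X × B).2) ∈ linkC2 f g one zero := by
    intro p
    refine ⟨?_, h1b _⟩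
    show ((p : X × B).1, g one (p : X × B).2) ∈ _
    rw [hg1]; exact p.2
  have memE₂ : ∀ p : linkC1 f one zero,
      (one, (p : X × B).1, (p : X × B).2) ∈ linkC2 f g one zero :=
    fun p => ⟨h1b _, p.2⟩
  let E₁ : linkC1 f one zero → linkC2 f g one zero :=
    fun p => ⟨(p.1.1, one, p.1.2), memE₁ p⟩
  let E₂ : linkC1 f one zero → linkC2 f g one zero :=
    fun p => ⟨(one, p.1.1, p.1.2), memE₂ p⟩
  have hME₁ : ∀ p, linkMS mul hm (E₁ p) = p := fun p =>
    Subtype.ext (show (mul p.1.1 one, p.1.2) = p.1 by rw [honer])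
  have hME₂ : ∀ p, linkMS mul hm (E₂ p) = p := fun p =>
    Subtype.ext (show (mul one p.1.1, p.1.2) = p.1 by rw [honel])
  have hΘE₂ : ∀ p, linkθS mul bar hθc (E₂ p) = E₂ p := fun p =>
    Subtype.ext (show (bar one, mul one p.1.1, p.1.2) = (one, p.1.1, p.1.2) by
      rw [hbar1, honel])
  have hΦE₁ : ∀ p, linkφS mul bar hφc (E₁ p) = E₁ p := fun p =>
    Subtype.ext (show (mul p.1.1 one, bar one,
        g (mul (bar p.1.1) (mul p.1.1 one)) p.1.2) = (p.1.1, one, p.1.2) by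
      rw [honer, hbar1, hiv'])
  -- values of m∘θ, m∘φ on E₁ p, E₂ p
  have hMΘE₁ : ∀ p, linkMS mul hm (linkθS mul bar hθc (E₁ p)) =
      ⟨(one, p.1.2), h1b _⟩ := fun p => Subtype.ext (hMθ (E₁ p))
  have hMΦE₂ : ∀ p, linkMS mul hm (linkφS mul bar hφc (E₂ p)) =
      ⟨(one, g p.1.1 p.1.2), h1b _⟩ := fun p => Subtype.ext (hMφ (E₂ p))
  have hMΘE₂ : ∀ p, linkMS mul hm (linkθS mul bar hθc (E₂ p)) = p := fun p => by
    rw [hΘE₂, hME₂]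
  have hMΦE₁ : ∀ p, linkMS mul hm (linkφS mul bar hφc (E₁ p)) = p := fun p => by
    rw [hΦE₁, hME₁]
  -- unitality
  have hUnital : IsUnitalLink (linkθS mul bar hθc) (linkφS mul bar hφc)
      (linkMS mul hm) := by
    refine ⟨hmθ, hmφ, E₁, E₂, funext hME₁, funext hME₂, funext hΘE₂,
      funext hΦE₁, ?_, ?_, ?_, ?_⟩
    · funext p
      apply Subtype.ext
      simp only [Function.comp_apply]
      show ((linkMS mul hm (linkθS mul bar hθc
          (linkφS mul bar hφc (E₂ p)))) : X × B) = _
      rw [hMθ (linkφS mul bar hφc (E₂ p)), hMφ (linkθS mul bar hθc (E₁ p))]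
      show (bar p.1.1, g (mul (bar one) (mul one p.1.1)) p.1.2) =
        (bar p.1.1, g (mul p.1.1 one) p.1.2)
      rw [hbar1, honel, honel, honer]
    · funext t
      apply Subtype.ext
      simp only [Function.comp_apply]
      show ((linkMS mul hm (linkθS mul bar hθc
          (E₁ (linkMS mul hm (linkφS mul bar hφc t))))) : X × B) = _
      rw [hMθ (E₁ (linkMS mul hm (linkφS mul bar hφc t))),
        hMφ (E₂ (linkMS mul hm (linkθS mul bar hθc t)))]
      show (one, (linkMS mul hm (linkφS mul bar hφc t) : X × B).2) =
        (one, g (linkMS mul hm (linkθS mul bar hθc t) : X × B).1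
          (linkMS mul hm (linkθS mul bar hθc t) : X × B).2)
      rw [hMφ t, hMθ t]
    · funext t
      apply Subtype.ext
      simp only [Function.comp_apply]
      show ((linkMS mul hm (linkθS mul bar hθc
          (E₁ (linkMS mul hm t)))) : X × B) = _
      rw [hMθ (E₁ (linkMS mul hm t)),
        hMθ (E₁ (linkMS mul hm (linkθS mul bar hθc t)))]
      show (one, t.1.2.2) = (one, (linkMS mul hm (linkθS mul bar hθc t) : X × B).2)
      rw [hMθ t]
    · funext t
      apply Subtype.ext
      simp only [Function.comp_apply]
      show ((linkMS mul hm (linkφS mul bar hφc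
          (E₂ (linkMS mul hm t)))) : X × B) = _
      rw [hMφ (E₂ (linkMS mul hm t)),
        hMφ (E₂ (linkMS mul hm (linkφS mul bar hφc t)))]
      show (one, g (mul t.1.1 t.1.2.1) t.1.2.2) =
        (one, g (linkMS mul hm (linkφS mul bar hφc t) : X × B).1
          (linkMS mul hm (linkφS mul bar hφc t) : X × B).2)
      rw [hMφ t, hg]
  -- the main bicartesian square  C₂ ⇉ C₁ ⇉ B
  have hcomm1 : ∀ t : linkC2 f g one zero,
      ((linkMS mul hm ∘ linkφS mul bar hφc) t : X × B).2 =
      g ((linkMS mul hm ∘ linkθS mul bar hθc) t : X × B).1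
        ((linkMS mul hm ∘ linkθS mul bar hθc) t : X × B).2 := by
    intro t
    simp only [Function.comp_apply]
    rw [hMθ t, hMφ t]
  have hbicart1 : Bicartesian (linkMS mul hm ∘ linkφS mul bar hφc)
      (linkMS mul hm ∘ linkθS mul bar hθc)
      (fun p : linkC1 f one zero => (p : X × B).2)
      (fun p : linkC1 f one zero => g (p : X × B).1 (p : X × B).2) := by
    constructor
    · apply types_isPullback _ _ _ _ hcomm1
      · intro t t' h1 h2
        apply Subtype.ext
        have e1 := congrArg Subtype.val h1
        have e2 := congrArg Subtype.val h2
        simp only [Function.comp_apply] at e1 e2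
        rw [hMφ t, hMφ t'] at e1
        rw [hMθ t, hMθ t'] at e2
        have ha : t.1.1 = t'.1.1 := (Prod.ext_iff.mp e1).1
        have hb : t.1.2 = t'.1.2 := e2
        exact Prod.ext ha hb
      · intro p q hpq
        have hpq' : (p : X × B).2 = g (q : X × B).1 (q : X × B).2 := hpq
        have memt : ((p : X × B).1, (q : X × B).1, (q : X × B).2) ∈
            linkC2 f g one zero := by
          refine ⟨?_, q.2⟩
          show ((p : X × B).1, g (q : X × B).1 (q : X × B).2) ∈ _
          rw [← hpq']; exact p.2
        refine ⟨⟨_, memt⟩, ?_, ?_⟩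
        · apply Subtype.ext
          simp only [Function.comp_apply]
          rw [hMφ ⟨_, memt⟩]
          show ((p : X × B).1, g (q : X × B).1 (q : X × B).2) = _
          rw [← hpq']
        · apply Subtype.ext
          simp only [Function.comp_apply]
          rw [hMθ ⟨_, memt⟩]
    · apply types_isPushout _ _ _ _ hcomm1
      · intro W w w' hd hc
        funext b
        exact hd ⟨(one, b), h1b b⟩
      · intro W u v hrel
        refine ⟨fun b => u ⟨(one, b), h1b b⟩, ?_, ?_⟩
        · intro p
          show u ⟨(one, (p : X × B).2), _⟩ = u p
          have k1 := hrel (E₁ p)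
          simp only [Function.comp_apply] at k1
          rw [hMΦE₁ p, hMΘE₁ p] at k1
          have k2 := hrel (E₁ (⟨(one, (p : X × B).2), h1b _⟩ : linkC1 f one zero))
          simp only [Function.comp_apply] at k2
          rw [hMΦE₁ _, hMΘE₁ _] at k2
          rw [k1, k2]
        · intro p
          show u ⟨(one, g (p : X × B).1 (p : X × B).2), _⟩ = v p
          have k1 := hrel (E₂ p)
          simp only [Function.comp_apply] at k1
          rw [hMΦE₂ p, hMΘE₂ p] at k1
          exact k1
  -- the object of composable pairs
  have hcond : ∀ q : linkC3 (linkMS mul hm ∘ linkφS mul bar hφc)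
      (linkMS mul hm ∘ linkθS mul bar hθc),
      q.1.2.1.1 = q.1.1.1.2.1 ∧
        g q.1.2.1.2.1 q.1.2.1.2.2 = q.1.1.1.2.2 := by
    intro q
    have h := congrArg Subtype.val q.2
    simp only [Function.comp_apply] at h
    rw [hMφ q.1.2, hMθ q.1.1] at h
    exact ⟨(Prod.ext_iff.mp h).1, (Prod.ext_iff.mp h).2⟩
  have memM₁ : ∀ q : linkC3 (linkMS mul hm ∘ linkφS mul bar hφc)
      (linkMS mul hm ∘ linkθS mul bar hθc),
      (mul q.1.1.1.1 q.1.1.1.2.1, q.1.2.1.2.1, q.1.2.1.2.2) ∈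
        linkC2 f g one zero := by
    intro q
    refine ⟨?_, q.1.2.2.2⟩
    show (mul q.1.1.1.1 q.1.1.1.2.1, g q.1.2.1.2.1 q.1.2.1.2.2) ∈ _
    rw [(hcond q).2]
    exact hm q.1.1.1 q.1.1.2
  have memM₂ : ∀ q : linkC3 (linkMS mul hm ∘ linkφS mul bar hφc)
      (linkMS mul hm ∘ linkθS mul bar hθc),
      (q.1.1.1.1, mul q.1.1.1.2.1 q.1.2.1.2.1, q.1.2.1.2.2) ∈
        linkC2 f g one zero := by
    intro q
    constructor
    · show (q.1.1.1.1, g (mul q.1.1.1.2.1 q.1.2.1.2.1) q.1.2.1.2.2) ∈ _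
      rw [hg, (hcond q).2]
      exact q.1.1.2.1
    · show (mul q.1.1.1.2.1 q.1.2.1.2.1, q.1.2.1.2.2) ∈ _
      rw [← (hcond q).1]
      exact hm q.1.2.1 q.1.2.2
  have hAssoc : IsAssociativeLink (linkθS mul bar hθc) (linkφS mul bar hφc)
      (linkMS mul hm) := by
    refine ⟨B, (fun p => (p : X × B).2),
      (fun p => g (p : X × B).1 (p : X × B).2),
      linkC3 (linkMS mul hm ∘ linkφS mul bar hφc)
        (linkMS mul hm ∘ linkθS mul bar hθc),
      linkP1 _ _, linkP2 _ _, hbicart1, ?_,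
      fun q => ⟨_, memM₁ q⟩, fun q => ⟨_, memM₂ q⟩, ?_, ?_, ?_, ?_, ?_⟩
    · -- second bicartesian square
      constructor
      · apply types_isPullback _ _ _ _ (fun q => q.2)
        · intro q q' h1 h2
          apply Subtype.ext
          exact Prod.ext h2 h1
        · intro s t hst
          exact ⟨⟨(t, s), hst⟩, rfl, rfl⟩
      · apply types_isPushout _ _ _ _ (fun q => q.2)
        · intro W w w' hfe hge
          funext p
          have := hge (E₂ p)
          simp only [Function.comp_apply] at this
          rwa [hMΘE₂ p] at this
        · intro W u v hrel
          -- the "inverse" witness σ t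
          have memσ : ∀ t : linkC2 f g one zero,
              (t.1.2.1, bar t.1.2.1, g t.1.2.1 t.1.2.2) ∈
                linkC2 f g one zero := by
            intro t
            constructor
            · show (t.1.2.1, g (bar t.1.2.1) (g t.1.2.1 t.1.2.2)) ∈ _
              rw [← hg, hiv']
              exact t.2.2
            · exact (hstar t.1.2.1 t.1.2.2 t.2.2).1
          have hσ : ∀ t : linkC2 f g one zero,
              (linkMS mul hm ∘ linkφS mul bar hφc) ⟨_, memσ t⟩ =
              (linkMS mul hm ∘ linkθS mul bar hθc) t := by
            intro t
            apply Subtype.ext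
            simp only [Function.comp_apply]
            rw [hMφ ⟨_, memσ t⟩, hMθ t]
            show (t.1.2.1, g (bar t.1.2.1) (g t.1.2.1 t.1.2.2)) = _
            rw [← hg, hiv']
          have hvu : ∀ t : linkC2 f g one zero, v t = u ⟨_, memσ t⟩ :=
            fun t => (hrel ⟨(t, ⟨_, memσ t⟩), hσ t⟩).symm
          refine ⟨fun p => v (E₂ p), ?_, ?_⟩
          · intro t
            have key := hrel ⟨(E₂ ((linkMS mul hm ∘ linkφS mul bar hφc) t), t),
              (hMΘE₂ _).symm⟩
            exact key.symm
          · intro t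
            show v (E₂ ((linkMS mul hm ∘ linkθS mul bar hθc) t)) = v t
            rw [hvu t, hvu (E₂ ((linkMS mul hm ∘ linkθS mul bar hθc) t))]
            congr 1
            apply Subtype.ext
            show (((linkMS mul hm ∘ linkθS mul bar hθc) t : X × B).1,
              bar ((linkMS mul hm ∘ linkθS mul bar hθc) t : X × B).1,
              g ((linkMS mul hm ∘ linkθS mul bar hθc) t : X × B).1
                ((linkMS mul hm ∘ linkθS mul bar hθc) t : X × B).2) = _
            simp only [Function.comp_apply]
            rw [hMθ t]
    · funext q
      apply Subtype.ext
      simp only [Function.comp_apply]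
      rw [hMφ ⟨_, memM₁ q⟩]
      show (mul q.1.1.1.1 q.1.1.1.2.1, g q.1.2.1.2.1 q.1.2.1.2.2) = _
      rw [(hcond q).2]
      rfl
    · funext q
      apply Subtype.ext
      simp only [Function.comp_apply]
      show _ = (linkMS mul hm (linkθS mul bar hθc q.1.2) : X × B)
      rw [hMθ ⟨_, memM₁ q⟩, hMθ q.1.2]
    · funext q
      apply Subtype.ext
      simp only [Function.comp_apply]
      have hrhs : ((linkMS mul hm (linkφS mul bar hφc q.1.1)) : X × B) =
          (q.1.1.1.1, g q.1.1.1.2.1 q.1.1.1.2.2) := hMφ q.1.1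
      show _ = ((linkMS mul hm (linkφS mul bar hφc q.1.1)) : X × B)
      rw [hMφ ⟨_, memM₂ q⟩, hrhs]
      show (q.1.1.1.1, g (mul q.1.1.1.2.1 q.1.2.1.2.1) q.1.2.1.2.2) = _
      rw [hg, (hcond q).2]
    · funext q
      apply Subtype.ext
      simp only [Function.comp_apply]
      rw [hMθ ⟨_, memM₂ q⟩]
      show (mul q.1.1.1.2.1 q.1.2.1.2.1, q.1.2.1.2.2) = _
      rw [← (hcond q).1]
      rfl
    · funext q
      apply Subtype.ext
      simp only [Function.comp_apply]
      show (mul (mul q.1.1.1.1 q.1.1.1.2.1) q.1.2.1.2.1, q.1.2.1.2.2) =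
        (mul q.1.1.1.1 (mul q.1.1.1.2.1 q.1.2.1.2.1), q.1.2.1.2.2)
      rw [hassoc]
  refine ⟨hUnital, hAssoc, funext (fun b => rfl), funext (fun b => ?_), hbicart1, ?_⟩
  · show g one b = b
    exact hg1 b
  · intro e₁ e₂ hme₁ hme₂ hθe₂ hφe₁
    -- e₁ = E₁ and e₂ = E₂ by joint monomorphy
    have he₁ : e₁ = E₁ := by
      funext p
      apply hmφ
      · have h := congrFun hme₁ p
        simp only [Function.comp_apply, id_eq] at h
        rw [h, hME₁ p]
      · show linkMS mul hm (linkφS mul bar hφc (e₁ p)) =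
          linkMS mul hm (linkφS mul bar hφc (E₁ p))
        have h2 := congrFun hφe₁ p
        simp only [Function.comp_apply] at h2
        have h := congrFun hme₁ p
        simp only [Function.comp_apply, id_eq] at h
        rw [h2, hΦE₁ p, h, hME₁ p]
    have he₂ : e₂ = E₂ := by
      funext p
      apply hmθ
      · have h := congrFun hme₂ p
        simp only [Function.comp_apply, id_eq] at h
        rw [h, hME₂ p]
      · show linkMS mul hm (linkθS mul bar hθc (e₂ p)) =
          linkMS mul hm (linkθS mul bar hθc (E₂ p))
        have h2 := congrFun hθe₂ p
        simp only [Function.comp_apply] at h2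
        have h := congrFun hme₂ p
        simp only [Function.comp_apply, id_eq] at h
        rw [h2, hΘE₂ p, h, hME₂ p]
    constructor
    · funext p
      show (⟨(one, (p : X × B).2), h1b _⟩ : linkC1 f one zero) =
        linkMS mul hm (linkθS mul bar hθc (e₁ p))
      rw [he₁, hMΘE₁ p]
    · funext p
      show (⟨(one, g (p : X × B).1 (p : X × B).2), h1b _⟩ : linkC1 f one zero) =
        linkMS mul hm (linkφS mul bar hφc (e₂ p))
      rw [he₂, hMΦE₂ p]
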